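/- Let α be a real number, set Q₁ = sinh(2α) − cosh(2α), Q₂ = (sinh²(2α) − sinh(2α)·cosh(2α))/cosh(2α), c = cosh(2α), s = sinh(2α). Let A = [[Q₂+Q₁, 0, 2, 0],[2Q₁, Q₁−Q₂, 0, −2],[−2, 0, Q₁−Q₂, 0],[0, 2, 2Q₁, Q₂+Q₁]], let D = [[1, 1, 0, 0],[1, 1, 0, 0],[0, 0, Q₁², Q₁²],[0, 0, Q₁², Q₁²]], and let V = (1/2)[[c, s, 0, 0],[s, c, 0, 0],[0, 0, c, −s],[0, 0, −s, c]]. Then A·V + V·Aᵀ + D = 0. -/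

import Mathlib

/-!
STATEMENT 14: The two-mode squeezed covariance matrix V satisfies the Lyapunov
equation A·V + V·Aᵀ + D = 0 for the drift matrix A and diffusion matrix D of the
paper's first cascade realization.
-/

open Matrix

noncomputable section

def Q1 (α : ℝ) : ℝ := Real.sinh (2*α) - Real.cosh (2*α)

def Q2 (α : ℝ) : ℝ :=
  (Real.sinh (2*α)^2 - Real.sinh (2*α) * Real.cosh (2*α)) / Real.cosh (2*α)

/-- The drift matrix A of the first cascade realization. -/
def driftA (α : ℝ) : Matrix (Fin 4) (Fin 4) ℝ :=
  !![Q2 α + Q1 α, 0, 2, 0;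
     2 * Q1 α, Q1 α - Q2 α, 0, -2;
     -2, 0, Q1 α - Q2 α, 0;
     0, 2, 2 * Q1 α, Q2 α + Q1 α]

/-- The diffusion matrix D = (1/2)BB† of the first cascade realization. -/
def diffD (α : ℝ) : Matrix (Fin 4) (Fin 4) ℝ :=
  !![1, 1, 0, 0;
     1, 1, 0, 0;
     0, 0, Q1 α ^ 2, Q1 α ^ 2;
     0, 0, Q1 α ^ 2, Q1 α ^ 2]

/-- The covariance matrix of the two-mode squeezed state with squeezing parameter α. -/
def twoModeCov (α : ℝ) : Matrix (Fin 4) (Fin 4) ℝ :=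
  (1/2 : ℝ) • !![Real.cosh (2*α), Real.sinh (2*α), 0, 0;
                 Real.sinh (2*α), Real.cosh (2*α), 0, 0;
                 0, 0, Real.cosh (2*α), -Real.sinh (2*α);
                 0, 0, -Real.sinh (2*α), Real.cosh (2*α)]

set_option maxHeartbeats 2000000 in
theorem twoModeCov_lyapunov (α : ℝ) :
    driftA α * twoModeCov α + twoModeCov α * (driftA α)ᵀ + diffD α = 0 := by
  have hc : Real.cosh (2*α) ≠ 0 := (Real.cosh_pos (2*α)).ne'
  have hid : Real.cosh (2*α)^2 - Real.sinh (2*α)^2 = 1 := Real.cosh_sq_sub_sinh_sq _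
  unfold driftA twoModeCov diffD Q1 Q2
  set c := Real.cosh (2*α) with hcdef
  set s := Real.sinh (2*α) with hsdef
  ext i j
  fin_cases i <;> fin_cases j <;>
    simp only [Matrix.add_apply, Matrix.mul_apply, Fin.sum_univ_four, Matrix.smul_apply,
      Matrix.transpose_apply, Matrix.cons_val', Matrix.cons_val_zero, Matrix.cons_val_one,
      Matrix.head_cons, Matrix.head_fin_const, Matrix.empty_val', Matrix.cons_val_fin_one,
      Matrix.cons_val_two, Matrix.cons_val_three, Matrix.tail_cons, Matrix.zero_apply,
      Matrix.of_apply, smul_eq_mul, Fin.reduceFinMk, Matrix.cons_val] <;>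
    field_simp <;>
    first
      | linear_combination (-4*c) * hid
      | linear_combination (-8*c) * hid
      | linear_combination (-2*c) * hid
      | nlinarith [hid]
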